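/- Let (H →∂ G, ▷) be a crossed module with G and H finite groups. Then the number of tuples (g₁₂, g₁₃, g₁₄, g₂₃, g₂₄, g₃₄, h₁₂₃, h₁₂₄, h₁₃₄, h₂₃₄) ∈ G⁶ × H⁴ satisfying the four face flatness conditions ∂(h₁₂₃) g₂₃ g₁₂ g₁₃⁻¹ = 1, ∂(h₁₂₄) g₂₄ g₁₂ g₁₄⁻¹ = 1, ∂(h₁₃₄) g₃₄ g₁₃ g₁₄⁻¹ = 1, ∂(h₂₃₄) g₃₄ g₂₃ g₂₄⁻¹ = 1, together with the tetrahedron flatness condition h₁₃₄ (g₃₄ ▷ h₁₂₃) h₂₃₄⁻¹ h₁₂₄⁻¹ = 1, is exactly |G|³ · |H|³. (Equivalently, the state-sum invariant of the 3-ball D³ computed from the triangulation by a single tetrahedron equals |H| / |G|.) -/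
import Mathlib


/-- A crossed module `(H --∂--> G, ▷)`: groups `G`, `H`, a group homomorphism
`δ : H →* G`, and a left action of `G` on `H` in which every `g : G` acts as a
group automorphism of `H` (encoded as `act : G →* MulAut H`), satisfying the
equivariance axiom and the Peiffer identity. -/
structure CrossedModule (G H : Type*) [Group G] [Group H] where
  δ : H →* G
  act : G →* MulAut H
  equivariance : ∀ (g : G) (h : H), δ (act g h) = g * δ h * g⁻¹
  peiffer : ∀ (h h' : H), act (δ h) h' = h * h' * h⁻¹

/-- For finite `G`, `H`, the number of colorings of the single-tetrahedron
triangulation of `D³` satisfying the four face flatness conditions and the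
tetrahedron flatness condition is exactly `|G|³ * |H|³` (so the state-sum
invariant of `D³` equals `|H| / |G|`). -/
theorem card_tetrahedron_colorings {G H : Type*} [Group G] [Group H]
    [Fintype G] [Fintype H] (X : CrossedModule G H) :
    Nat.card {t : (G × G × G × G × G × G) × (H × H × H × H) //
      X.δ t.2.1 * t.1.2.2.2.1 * t.1.1 * t.1.2.1⁻¹ = 1 ∧
      X.δ t.2.2.1 * t.1.2.2.2.2.1 * t.1.1 * t.1.2.2.1⁻¹ = 1 ∧
      X.δ t.2.2.2.1 * t.1.2.2.2.2.2 * t.1.2.1 * t.1.2.2.1⁻¹ = 1 ∧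
      X.δ t.2.2.2.2 * t.1.2.2.2.2.2 * t.1.2.2.2.1 * t.1.2.2.2.2.1⁻¹ = 1 ∧
      t.2.2.2.1 * X.act t.1.2.2.2.2.2 t.2.1 * t.2.2.2.2⁻¹ * t.2.2.1⁻¹ = 1} =
    Fintype.card G ^ 3 * Fintype.card H ^ 3 := by
  have e : {t : (G × G × G × G × G × G) × (H × H × H × H) //
      X.δ t.2.1 * t.1.2.2.2.1 * t.1.1 * t.1.2.1⁻¹ = 1 ∧
      X.δ t.2.2.1 * t.1.2.2.2.2.1 * t.1.1 * t.1.2.2.1⁻¹ = 1 ∧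
      X.δ t.2.2.2.1 * t.1.2.2.2.2.2 * t.1.2.1 * t.1.2.2.1⁻¹ = 1 ∧
      X.δ t.2.2.2.2 * t.1.2.2.2.2.2 * t.1.2.2.2.1 * t.1.2.2.2.2.1⁻¹ = 1 ∧
      t.2.2.2.1 * X.act t.1.2.2.2.2.2 t.2.1 * t.2.2.2.2⁻¹ * t.2.2.1⁻¹ = 1}
      ≃ (G × G × G) × (H × H × H) := by
    refine
      { toFun := fun t => ((t.1.1.1, t.1.1.2.1, t.1.1.2.2.1),
          (t.1.2.1, t.1.2.2.2.1, t.1.2.2.2.2))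
        invFun := fun p =>
          ⟨((p.1.1, p.1.2.1, p.1.2.2,
              (X.δ p.2.1)⁻¹ * p.1.2.1 * p.1.1⁻¹,
              (X.δ (p.2.2.1 * X.act ((X.δ p.2.2.1)⁻¹ * p.1.2.2 * p.1.2.1⁻¹) p.2.1
                * p.2.2.2⁻¹))⁻¹ * p.1.2.2 * p.1.1⁻¹,
              (X.δ p.2.2.1)⁻¹ * p.1.2.2 * p.1.2.1⁻¹),
            (p.2.1,
             p.2.2.1 * X.act ((X.δ p.2.2.1)⁻¹ * p.1.2.2 * p.1.2.1⁻¹) p.2.1 * p.2.2.2⁻¹,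
             p.2.2.1, p.2.2.2)), ?_, ?_, ?_, ?_, ?_⟩
        left_inv := ?_
        right_inv := fun p => rfl }
    · obtain ⟨⟨g12, g13, g14⟩, h123, h134, h234⟩ := p; group
    · obtain ⟨⟨g12, g13, g14⟩, h123, h134, h234⟩ := p; group
    · obtain ⟨⟨g12, g13, g14⟩, h123, h134, h234⟩ := p; group
    · obtain ⟨⟨g12, g13, g14⟩, h123, h134, h234⟩ := p
      rw [map_mul, map_mul, map_inv, X.equivariance]
      group
    · obtain ⟨⟨g12, g13, g14⟩, h123, h134, h234⟩ := p; group
    · rintro ⟨⟨⟨g12, g13, g14, g23, g24, g34⟩, h123, h124, h134, h234⟩,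
        h1, h2, h3, h4, h5⟩
      dsimp only at h1 h2 h3 h4 h5
      have hg34 : g34 = (X.δ h134)⁻¹ * g14 * g13⁻¹ := by
        have h := mul_inv_eq_one.mp h3
        rw [← h]; group
      have hg23 : g23 = (X.δ h123)⁻¹ * g13 * g12⁻¹ := by
        have h := mul_inv_eq_one.mp h1
        rw [← h]; group
      have hh124 : h124 = h134 * X.act g34 h123 * h234⁻¹ := by
        have h := mul_inv_eq_one.mp h5
        rw [← h]
      have hg24 : g24 = (X.δ h124)⁻¹ * g14 * g12⁻¹ := by
        have h := mul_inv_eq_one.mp h2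
        rw [← h]; group
      apply Subtype.ext
      subst hg23; subst hg24; subst hh124; subst hg34
      rfl
  rw [Nat.card_congr e]
  simp [Nat.card_eq_fintype_card]
  ring
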